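/- Let N ∈ ℕ, δt > 0, and let (ρ_K^n)_{K,n} be real numbers on the cells of a finite partition with measures |K| > 0, satisfying for each K and each n the update |K|(ρ_K^{n+1} − ρ_K^n)/δt + Σ_{σ∈E(K)} |σ| ρ_σ^{n+1} u_{K,σ}^{n+1} = 0, where the face values ρ_σ^{n+1} are upwind (equal to the upstream adjacent cell value according to the sign of u_{K,σ}^{n+1}), the fluxes are conservative (u_{K,σ} = −u_{L,σ} across interior faces σ = K|L, and u_{K,σ} = 0 on boundary faces), and each cell satisfies the discrete divergence-free condition Σ_{σ∈E(K)} |σ| u_{K,σ}^{n+1} = 0. If ρ_min ≤ ρ_K^0 ≤ ρ_max for all K with 0 < ρ_min, then ρ_min ≤ ρ_K^n ≤ ρ_max for all K and all n ≤ N. -/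

import Mathlib

open Finset

/-- Auxiliary discrete minimum principle: under the implicit upwind scheme with a
discretely divergence-free velocity, a uniform lower bound on the initial density
propagates to all time steps. -/
lemma dmp_aux {C F : Type*} [Fintype C] [Fintype F] [DecidableEq C]
    (vol : C → ℝ) (hvol : ∀ K, 0 < vol K)
    (area : F → ℝ) (harea : ∀ σ, 0 < area σ)
    (owner : F → C) (neighbor : F → Option C)
    (N : ℕ) (δt : ℝ) (hδt : 0 < δt)
    (ρ : ℕ → C → ℝ) (u : ℕ → F → ℝ)
    (ρface : ℕ → F → ℝ)
    (hupw : ∀ n σ, ρface n σ =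
      if 0 ≤ u n σ then ρ n (owner σ) else ρ n ((neighbor σ).getD (owner σ)))
    (hdivfree : ∀ n K, n ≤ N →
      ((∑ σ : F, if owner σ = K then area σ * u n σ else 0)
        - ∑ σ : F, if neighbor σ = some K then area σ * u n σ else 0) = 0)
    (hmass : ∀ n K, n < N →
      vol K * (ρ (n + 1) K - ρ n K) / δt
        + ((∑ σ : F, if owner σ = K then area σ * ρface (n + 1) σ * u (n + 1) σ else 0)
          - ∑ σ : F, if neighbor σ = some K then
              area σ * ρface (n + 1) σ * u (n + 1) σ else 0) = 0)
    (ρmin : ℝ)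
    (h0 : ∀ K, ρmin ≤ ρ 0 K) :
    ∀ n K, n ≤ N → ρmin ≤ ρ n K := by
  intro n
  induction n with
  | zero => intro K _; exact h0 K
  | succ n ih =>
    intro K hKN
    have hnN : n < N := hKN
    have hne : (univ : Finset C).Nonempty := ⟨K, mem_univ K⟩
    obtain ⟨K₀, _, hK₀⟩ := univ.exists_min_image (ρ (n + 1)) hne
    have hmin : ∀ L, ρ (n + 1) K₀ ≤ ρ (n + 1) L := fun L => hK₀ L (mem_univ L)
    set c := ρ (n + 1) K₀ with hc
    have hM := hmass n K₀ hnN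
    have hD := hdivfree (n + 1) K₀ hKN
    have e1 : (∑ σ : F, if owner σ = K₀ then
          area σ * (ρface (n + 1) σ - c) * u (n + 1) σ else 0)
        = (∑ σ : F, if owner σ = K₀ then area σ * ρface (n + 1) σ * u (n + 1) σ else 0)
          - c * ∑ σ : F, if owner σ = K₀ then area σ * u (n + 1) σ else 0 := by
      rw [Finset.mul_sum, ← Finset.sum_sub_distrib]
      refine Finset.sum_congr rfl fun σ _ => ?_
      split <;> ring
    have e2 : (∑ σ : F, if neighbor σ = some K₀ then
          area σ * (ρface (n + 1) σ - c) * u (n + 1) σ else 0)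
        = (∑ σ : F, if neighbor σ = some K₀ then
            area σ * ρface (n + 1) σ * u (n + 1) σ else 0)
          - c * ∑ σ : F, if neighbor σ = some K₀ then area σ * u (n + 1) σ else 0 := by
      rw [Finset.mul_sum, ← Finset.sum_sub_distrib]
      refine Finset.sum_congr rfl fun σ _ => ?_
      split <;> ring
    have hT : vol K₀ * (ρ (n + 1) K₀ - ρ n K₀) / δt
        + ((∑ σ : F, if owner σ = K₀ then
              area σ * (ρface (n + 1) σ - c) * u (n + 1) σ else 0)
          - ∑ σ : F, if neighbor σ = some K₀ then
              area σ * (ρface (n + 1) σ - c) * u (n + 1) σ else 0) = 0 := by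
      rw [e1, e2]
      linear_combination hM - c * hD
    have hown : (∑ σ : F, if owner σ = K₀ then
        area σ * (ρface (n + 1) σ - c) * u (n + 1) σ else 0) ≤ 0 := by
      refine Finset.sum_nonpos fun σ _ => ?_
      split
      · rename_i hσ
        rw [hupw]
        split
        · rw [hσ]
          simp [hc]
        · rename_i hu
          push_neg at hu
          have h1 := hmin ((neighbor σ).getD (owner σ))
          nlinarith [mul_nonneg (mul_nonneg (harea σ).le (sub_nonneg.mpr h1))
            (neg_nonneg.mpr hu.le)]
      · exact le_refl 0
    have hnb : 0 ≤ (∑ σ : F, if neighbor σ = some K₀ then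
        area σ * (ρface (n + 1) σ - c) * u (n + 1) σ else 0) := by
      refine Finset.sum_nonneg fun σ _ => ?_
      split
      · rename_i hσ
        rw [hupw]
        split
        · rename_i hu
          have h1 := hmin (owner σ)
          exact mul_nonneg (mul_nonneg (harea σ).le (sub_nonneg.mpr h1)) hu
        · rw [hσ]
          simp [hc]
      · exact le_refl 0
    have h1 : 0 ≤ vol K₀ * (ρ (n + 1) K₀ - ρ n K₀) / δt := by linarith
    have h2 : 0 ≤ ρ (n + 1) K₀ - ρ n K₀ := by
      by_contra h
      push_neg at h
      have : vol K₀ * (ρ (n + 1) K₀ - ρ n K₀) / δt < 0 :=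
        div_neg_of_neg_of_pos (mul_neg_of_pos_of_neg (hvol K₀) h) hδt
      linarith
    have h3 : ρmin ≤ ρ n K₀ := ih K₀ hnN.le
    have h4 : ρmin ≤ c := by simp only [hc]; linarith
    exact le_trans h4 (hmin K)

theorem stmt_5 {C F : Type*} [Fintype C] [Fintype F] [DecidableEq C]
    (vol : C → ℝ) (hvol : ∀ K, 0 < vol K)
    (area : F → ℝ) (harea : ∀ σ, 0 < area σ)
    (owner : F → C) (neighbor : F → Option C)
    (N : ℕ) (δt : ℝ) (hδt : 0 < δt)
    (ρ : ℕ → C → ℝ) (u : ℕ → F → ℝ)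
    -- zero velocity through boundary faces
    (hbnd : ∀ n σ, neighbor σ = none → u n σ = 0)
    -- upwind face densities
    (ρface : ℕ → F → ℝ)
    (hupw : ∀ n σ, ρface n σ =
      if 0 ≤ u n σ then ρ n (owner σ) else ρ n ((neighbor σ).getD (owner σ)))
    -- discrete divergence-free condition on every cell
    (hdivfree : ∀ n K, n ≤ N →
      ((∑ σ : F, if owner σ = K then area σ * u n σ else 0)
        - ∑ σ : F, if neighbor σ = some K then area σ * u n σ else 0) = 0)
    -- implicit upwind discrete mass balance
    (hmass : ∀ n K, n < N →
      vol K * (ρ (n + 1) K - ρ n K) / δt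
        + ((∑ σ : F, if owner σ = K then area σ * ρface (n + 1) σ * u (n + 1) σ else 0)
          - ∑ σ : F, if neighbor σ = some K then
              area σ * ρface (n + 1) σ * u (n + 1) σ else 0) = 0)
    (ρmin ρmax : ℝ) (hρmin : 0 < ρmin)
    (h0 : ∀ K, ρmin ≤ ρ 0 K ∧ ρ 0 K ≤ ρmax) :
    ∀ n K, n ≤ N → ρmin ≤ ρ n K ∧ ρ n K ≤ ρmax := by
  have hlo := dmp_aux vol hvol area harea owner neighbor N δt hδt ρ u ρface hupw
    hdivfree hmass ρmin (fun K => (h0 K).1)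
  have hhi := dmp_aux vol hvol area harea owner neighbor N δt hδt
    (fun m L => -ρ m L) u (fun m σ => -ρface m σ)
    (fun m σ => by
      show -ρface m σ = if 0 ≤ u m σ then -ρ m (owner σ)
        else -ρ m ((neighbor σ).getD (owner σ))
      rw [hupw]; split <;> rfl)
    hdivfree
    (fun m K hm => by
      have e1 : (∑ σ : F, if owner σ = K then
            area σ * (-(ρface (m + 1) σ)) * u (m + 1) σ else 0)
          = -(∑ σ : F, if owner σ = K then
              area σ * ρface (m + 1) σ * u (m + 1) σ else 0) := by
        rw [← Finset.sum_neg_distrib]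
        refine Finset.sum_congr rfl fun σ _ => ?_
        split <;> ring
      have e2 : (∑ σ : F, if neighbor σ = some K then
            area σ * (-(ρface (m + 1) σ)) * u (m + 1) σ else 0)
          = -(∑ σ : F, if neighbor σ = some K then
              area σ * ρface (m + 1) σ * u (m + 1) σ else 0) := by
        rw [← Finset.sum_neg_distrib]
        refine Finset.sum_congr rfl fun σ _ => ?_
        split <;> ring
      rw [e1, e2]
      linear_combination -hmass m K hm)
    (-ρmax) (fun K => by have := (h0 K).2; linarith)
  intro n K hn
  refine ⟨hlo n K hn, ?_⟩
  have := hhi n K hn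
  linarith
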